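/- For every integer n ≥ 1, (2n)! / n! ≤ (e/√π) · (4/e)^n · n^n. -/

import Mathlib

open Real Stirling

lemma sqrt_pi_le_stirlingSeq (n : ℕ) (hn : 1 ≤ n) : Real.sqrt Real.pi ≤ stirlingSeq n := by
  obtain ⟨m, rfl⟩ := Nat.exists_eq_add_of_le hn
  have hlim : Filter.Tendsto (stirlingSeq ∘ Nat.succ) Filter.atTop (nhds (Real.sqrt Real.pi)) :=
    tendsto_stirlingSeq_sqrt_pi.comp (Filter.tendsto_add_atTop_nat 1)
  have := stirlingSeq'_antitone.le_of_tendsto hlim m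
  simpa [Nat.succ_eq_add_one, Nat.add_comm] using this

lemma stirlingSeq_le_one (n : ℕ) (hn : 1 ≤ n) :
    stirlingSeq n ≤ Real.exp 1 / Real.sqrt 2 := by
  obtain ⟨m, rfl⟩ := Nat.exists_eq_add_of_le hn
  have := stirlingSeq'_antitone (Nat.zero_le m)
  simpa [Nat.succ_eq_add_one, Nat.add_comm, stirlingSeq_one] using this

lemma factorial_eq (m : ℕ) (hm : 1 ≤ m) :
    (m.factorial : ℝ) = stirlingSeq m * (Real.sqrt (2 * m) * ((m : ℝ) / Real.exp 1) ^ m) := by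
  have hm' : (0:ℝ) < m := by exact_mod_cast hm
  have hpos : 0 < Real.sqrt (2 * m) * ((m : ℝ) / Real.exp 1) ^ m := by positivity
  rw [stirlingSeq, div_mul_cancel₀]
  exact hpos.ne'

/-- `(2n)!/n! ≤ (e/√π)·(4/e)^n·n^n` for `n ≥ 1`. -/
theorem stmt_4 (n : ℕ) (hn : 1 ≤ n) :
    ((2 * n).factorial : ℝ) / (n.factorial : ℝ)
      ≤ Real.exp 1 / Real.sqrt Real.pi * (4 / Real.exp 1) ^ n * (n : ℝ) ^ n := by
  have hn' : (0:ℝ) < n := by exact_mod_cast hn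
  have h2n : 1 ≤ 2 * n := by omega
  have hs1 : Real.sqrt Real.pi ≤ stirlingSeq n := sqrt_pi_le_stirlingSeq n hn
  have hs2 : stirlingSeq (2 * n) ≤ Real.exp 1 / Real.sqrt 2 := stirlingSeq_le_one _ h2n
  have hs1pos : 0 < stirlingSeq n :=
    lt_of_lt_of_le (Real.sqrt_pos.mpr Real.pi_pos) hs1
  have hs2pos : 0 < stirlingSeq (2 * n) := by
    have h : 2 * n = (2 * n - 1) + 1 := by omega
    rw [h]; exact stirlingSeq'_pos _
  have hepos := Real.exp_pos 1
  have hA : Real.sqrt (2 * (2 * n : ℕ)) = Real.sqrt 2 * Real.sqrt (2 * n) := by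
    push_cast
    rw [show (2:ℝ) * (2 * n) = 2 * (2 * (n:ℝ)) by ring,
      Real.sqrt_mul (by norm_num)]
  have hB : (((2 * n : ℕ) : ℝ) / Real.exp 1) ^ (2 * n)
      = (4 / Real.exp 1) ^ n * (n : ℝ) ^ n * ((n : ℝ) / Real.exp 1) ^ n := by
    push_cast
    rw [pow_mul, ← mul_pow, ← mul_pow]
    congr 1
    field_simp
    ring
  have key : ((2 * n).factorial : ℝ) / (n.factorial : ℝ)
      = stirlingSeq (2 * n) / stirlingSeq n * Real.sqrt 2
        * ((4 / Real.exp 1) ^ n * (n : ℝ) ^ n) := by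
    rw [factorial_eq (2 * n) h2n, factorial_eq n hn, hA, hB]
    have h1 : Real.sqrt (2 * n) ≠ 0 := by positivity
    have h2 : ((n : ℝ) / Real.exp 1) ^ n ≠ 0 := by positivity
    field_simp
  rw [key]
  have hC : (0:ℝ) ≤ (4 / Real.exp 1) ^ n * (n : ℝ) ^ n := by positivity
  have hfrac : stirlingSeq (2 * n) / stirlingSeq n * Real.sqrt 2
      ≤ Real.exp 1 / Real.sqrt Real.pi := by
    have hdiv : stirlingSeq (2 * n) / stirlingSeq n
        ≤ (Real.exp 1 / Real.sqrt 2) / Real.sqrt Real.pi :=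
      div_le_div₀ (by positivity) hs2 (Real.sqrt_pos.mpr Real.pi_pos) hs1
    have hsqrt2 : (0:ℝ) < Real.sqrt 2 := by positivity
    calc stirlingSeq (2 * n) / stirlingSeq n * Real.sqrt 2
        ≤ (Real.exp 1 / Real.sqrt 2) / Real.sqrt Real.pi * Real.sqrt 2 :=
          mul_le_mul_of_nonneg_right hdiv hsqrt2.le
      _ = Real.exp 1 / Real.sqrt Real.pi := by
          field_simp
  calc stirlingSeq (2 * n) / stirlingSeq n * Real.sqrt 2 * ((4 / Real.exp 1) ^ n * (n : ℝ) ^ n)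
      ≤ Real.exp 1 / Real.sqrt Real.pi * ((4 / Real.exp 1) ^ n * (n : ℝ) ^ n) :=
        mul_le_mul_of_nonneg_right hfrac hC
    _ = Real.exp 1 / Real.sqrt Real.pi * (4 / Real.exp 1) ^ n * (n : ℝ) ^ n := by ring
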